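/- arXiv:2007.10010 — 3 statements merged into one kernel-verified Lean document; each statement's English description precedes it below -/
import Mathlib

section
/- Squeezing function of the punctured disk: for the punctured unit disk A_0 = 𝔻 \ {0} and any z ∈ A_0, S_{A_0}(z) = |z|. -/
open Metric Set

noncomputable def squeezingFun1 (Ω : Set ℂ) (z : ℂ) : ℝ :=
  sSup {t : ℝ | ∃ (f : ℂ → ℂ) (a b : ℝ), 0 < a ∧ 0 < b ∧
    DifferentiableOn ℂ f Ω ∧ Set.InjOn f Ω ∧ f z = 0 ∧
    ball (0 : ℂ) a ⊆ f '' Ω ∧ f '' Ω ⊆ ball (0 : ℂ) b ∧ t = a / b}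

section Aux
open Complex Filter Topology

noncomputable def mob (z w : ℂ) : ℂ := (z - w) / (1 - (starRingEnd ℂ) z * w)

lemma mob_denom_ne {z w : ℂ} (hz : ‖z‖ < 1) (hw : ‖w‖ < 1) :
    (1 : ℂ) - (starRingEnd ℂ) z * w ≠ 0 := by
  intro h
  have : ‖(starRingEnd ℂ) z * w‖ < 1 := by
    rw [norm_mul, Complex.norm_conj]
    nlinarith [norm_nonneg z, norm_nonneg w]
  have h1 : (starRingEnd ℂ) z * w = 1 := by linear_combination -h
  rw [h1] at this; simp at this

lemma mob_normSq {z w : ℂ} :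
    Complex.normSq (1 - (starRingEnd ℂ) z * w) - Complex.normSq (z - w)
      = (1 - Complex.normSq z) * (1 - Complex.normSq w) := by
  simp [Complex.normSq_apply, Complex.sub_re, Complex.sub_im, Complex.mul_re, Complex.mul_im,
    Complex.conj_re, Complex.conj_im, Complex.one_re, Complex.one_im]
  ring

lemma mob_mem {z w : ℂ} (hz : ‖z‖ < 1) (hw : ‖w‖ < 1) :
    ‖mob z w‖ < 1 := by
  rw [mob, norm_div, div_lt_one (norm_pos_iff.mpr (mob_denom_ne hz hw))]
  have h1 : Complex.normSq z < 1 := by rw [← Complex.sq_norm] at *; nlinarith [norm_nonneg z]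
  have h2 : Complex.normSq w < 1 := by rw [← Complex.sq_norm] at *; nlinarith [norm_nonneg w]
  have := mob_normSq (z := z) (w := w)
  have h3 : Complex.normSq (z - w) < Complex.normSq (1 - (starRingEnd ℂ) z * w) := by nlinarith
  have := Complex.sq_norm (z - w)
  have := Complex.sq_norm (1 - (starRingEnd ℂ) z * w)
  nlinarith [norm_nonneg (z - w), norm_nonneg (1 - (starRingEnd ℂ) z * w)]

lemma mob_mob {z w : ℂ} (hz : ‖z‖ < 1) (hw : ‖w‖ < 1) :
    mob z (mob z w) = w := by
  have h1 := mob_denom_ne hz hw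
  have h2 := mob_denom_ne hz (mob_mem hz hw)
  rw [mob] at h2
  rw [mob, mob, div_eq_iff h2]
  have h1' : (1 : ℂ) - w * (starRingEnd ℂ) z ≠ 0 := by rwa [mul_comm]
  field_simp
  ring

lemma mob_self (z : ℂ) : mob z z = 0 := by simp [mob]

lemma mob_zero (z : ℂ) : mob z 0 = z := by simp [mob]

lemma mob_inj {z : ℂ} (hz : ‖z‖ < 1) :
    Set.InjOn (mob z) (ball (0:ℂ) 1) := by
  intro a ha b hb hab
  rw [mem_ball_zero_iff] at ha hb
  have := mob_mob hz ha
  rw [hab, mob_mob hz hb] at this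
  exact this.symm

lemma mob_diff {z : ℂ} (hz : ‖z‖ < 1) :
    DifferentiableOn ℂ (mob z) (ball (0:ℂ) 1) := by
  apply DifferentiableOn.div
  · exact (differentiable_const _).sub differentiable_id |>.differentiableOn
  · exact ((differentiable_const _).sub ((differentiable_const _).mul differentiable_id)).differentiableOn
  · intro w hw
    exact mob_denom_ne hz (mem_ball_zero_iff.mp hw)

lemma mob_image {z : ℂ} (hz : ‖z‖ < 1) :
    mob z '' (ball (0:ℂ) 1 \ {0}) = ball (0:ℂ) 1 \ {z} := by
  ext y
  constructor
  · rintro ⟨w, ⟨hw, hw0⟩, rfl⟩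
    rw [mem_ball_zero_iff] at hw
    refine ⟨mem_ball_zero_iff.2 (mob_mem hz hw), ?_⟩
    simp only [mem_singleton_iff]
    intro h
    apply hw0
    have := mob_mob hz hw
    rw [h, mob_self] at this
    simp [← this]
  · rintro ⟨hy, hyz⟩
    rw [mem_ball_zero_iff] at hy
    refine ⟨mob z y, ⟨mem_ball_zero_iff.2 (mob_mem hz hy), ?_⟩, mob_mob hz hy⟩
    simp only [mem_singleton_iff]
    intro h
    apply hyz
    have := mob_mob hz hy
    rw [h, mob_zero] at this
    simp [← this]

lemma abs_mem_squeezeSet {z : ℂ} (hz : z ∈ ball (0 : ℂ) 1 \ {0}) :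
    ‖z‖ ∈ {t : ℝ | ∃ (f : ℂ → ℂ) (a b : ℝ), 0 < a ∧ 0 < b ∧
      DifferentiableOn ℂ f (ball (0:ℂ) 1 \ {0}) ∧ Set.InjOn f (ball (0:ℂ) 1 \ {0}) ∧ f z = 0 ∧
      ball (0 : ℂ) a ⊆ f '' (ball (0:ℂ) 1 \ {0}) ∧
      f '' (ball (0:ℂ) 1 \ {0}) ⊆ ball (0 : ℂ) b ∧ t = a / b} := by
  obtain ⟨hz1, hz0⟩ := hz
  rw [mem_ball_zero_iff] at hz1
  have hz0' : z ≠ 0 := hz0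
  refine ⟨mob z, ‖z‖, 1, norm_pos_iff.mpr hz0', one_pos, ?_, ?_, mob_self z, ?_, ?_, by simp⟩
  · exact (mob_diff hz1).mono diff_subset
  · exact (mob_inj hz1).mono diff_subset
  · rw [mob_image hz1]
    intro w hw
    rw [mem_ball_zero_iff] at hw
    exact ⟨mem_ball_zero_iff.2 (hw.trans hz1), by simp; rintro rfl; exact absurd hw (lt_irrefl _)⟩
  · rw [mob_image hz1]
    exact fun w hw => hw.1

lemma mob_mapsTo {z : ℂ} (hz1 : ‖z‖ < 1) :
    Set.MapsTo (mob z) (ball (0:ℂ) 1 \ {z}) (ball (0:ℂ) 1 \ {0}) := by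
  rintro w ⟨hw, hwz⟩
  rw [mem_ball_zero_iff] at hw
  refine ⟨mem_ball_zero_iff.2 (mob_mem hz1 hw), ?_⟩
  simp only [mem_singleton_iff]
  intro h
  apply hwz
  have := mob_mob hz1 hw
  rw [h, mob_zero] at this
  simp [← this]

lemma squeeze_le {z : ℂ} (hz1 : ‖z‖ < 1) (hz0 : z ≠ 0) {f : ℂ → ℂ} {a b : ℝ}
    (ha : 0 < a) (hb : 0 < b)
    (hd : DifferentiableOn ℂ f (ball (0:ℂ) 1 \ {0}))
    (hinj : Set.InjOn f (ball (0:ℂ) 1 \ {0}))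
    (hfz : f z = 0)
    (hball : ball (0 : ℂ) a ⊆ f '' (ball (0:ℂ) 1 \ {0}))
    (himg : f '' (ball (0:ℂ) 1 \ {0}) ⊆ ball (0 : ℂ) b) :
    a / b ≤ ‖z‖ := by
  have hzmem : z ∈ ball (0:ℂ) 1 := mem_ball_zero_iff.2 hz1
  set S : Set ℂ := ball (0:ℂ) 1 \ {z} with hS
  set h : ℂ → ℂ := f ∘ mob z with hh
  -- h is differentiable on S
  have hmaps := mob_mapsTo hz1
  have hdh : DifferentiableOn ℂ h S :=
    hd.comp ((mob_diff hz1).mono diff_subset) hmaps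
  -- h values in ball 0 b
  have hhb : ∀ w ∈ S, h w ∈ ball (0:ℂ) b := fun w hw =>
    himg ⟨mob z w, hmaps hw, rfl⟩
  -- bounded
  have hbdd : BddAbove (norm ∘ h '' S) := by
    refine ⟨b, ?_⟩
    rintro t ⟨w, hw, rfl⟩
    exact le_of_lt (by simpa [mem_ball_zero_iff] using hhb w hw)
  set H : ℂ → ℂ := Function.update h z (limUnder (𝓝[≠] z) h) with hH
  have hc : ball (0:ℂ) 1 ∈ 𝓝 z := isOpen_ball.mem_nhds hzmem
  have hdH : DifferentiableOn ℂ H (ball (0:ℂ) 1) :=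
    Complex.differentiableOn_update_limUnder_of_bddAbove hc hdh hbdd
  have hHeq : ∀ w, w ≠ z → H w = h w := fun w hw => Function.update_of_ne hw _ _
  have hH0 : H 0 = 0 := by
    rw [hHeq 0 (Ne.symm hz0)]
    simp [hh, mob_zero, hfz]
  -- |H| < b away from z
  have hHlt : ∀ w ∈ S, ‖H w‖ < b := by
    intro w hw
    rw [hHeq w hw.2]
    simpa [mem_ball_zero_iff] using hhb w hw
  -- |H| ≤ b everywhere on the disk
  have hHle : ∀ w ∈ ball (0:ℂ) 1, ‖H w‖ ≤ b := by
    intro w hw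
    rcases eq_or_ne w z with rfl | hwz
    · have hcont : ContinuousWithinAt H ({w}ᶜ) w :=
        ((hdH.continuousOn.continuousAt hc).continuousWithinAt)
      refine le_of_tendsto (hcont.tendsto.norm) ?_
      filter_upwards [self_mem_nhdsWithin,
        mem_nhdsWithin_of_mem_nhds (isOpen_ball.mem_nhds hw)] with x hx1 hx2
      exact le_of_lt (hHlt x ⟨hx2, hx1⟩)
    · exact le_of_lt (hHlt w ⟨hw, hwz⟩)
  -- injectivity on S
  have hHinj : Set.InjOn H S := by
    intro x hx y hy hxy
    rw [hHeq x hx.2, hHeq y hy.2] at hxy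
    have := hinj (hmaps hx) (hmaps hy) hxy
    have h1 := mob_mob hz1 (mem_ball_zero_iff.mp hx.1)
    have h2 := mob_mob hz1 (mem_ball_zero_iff.mp hy.1)
    rw [← h1, ← h2, this]
  -- strict bound at z via maximum principle
  have hHzb : ‖H z‖ < b := by
    by_contra hcon
    push_neg at hcon
    have heq : ‖H z‖ = b := le_antisymm (hHle z hzmem) hcon
    have hmax : IsMaxOn (norm ∘ H) (ball (0:ℂ) 1) z := by
      intro w hw
      simp only [Function.comp]
      calc ‖H w‖ ≤ b := hHle w hw
      _ = ‖H z‖ := heq.symm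
    have := Complex.norm_eqOn_of_isPreconnected_of_isMaxOn
      (convex_ball (0:ℂ) 1).isPreconnected isOpen_ball hdH hzmem hmax
    have h0 := this (mem_ball_zero_iff.2 (show ‖(0:ℂ)‖ < 1 by simp))
    rw [hH] at h0
    simp only [Function.comp, Function.const_apply] at h0
    rw [show (Function.update h z (limUnder (𝓝[≠] z) h)) 0 = H 0 from rfl, hH0] at h0
    simp only [norm_zero] at h0
    rw [show Function.update h z (limUnder (𝓝[≠] z) h) z = H z from rfl] at h0
    rw [← h0] at heq
    exact hb.ne' (heq ▸ rfl)
  have hmapsH : Set.MapsTo H (ball (0:ℂ) 1) (ball (H 0) b) := by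
    intro w hw
    rw [hH0, mem_ball_zero_iff]
    rcases eq_or_ne w z with rfl | hwz
    · exact hHzb
    · exact hHlt w ⟨hw, hwz⟩
  -- Schwarz lemma
  have hschwarz : ‖H z‖ ≤ b * ‖z‖ := by
    have := Complex.dist_le_div_mul_dist_of_mapsTo_ball hdH (hmapsH.mono_right ball_subset_closedBall) hzmem
    simpa [hH0, Complex.dist_eq] using this
  -- a ≤ |H z|
  have hkey : a ≤ ‖H z‖ := by
    by_contra hcon
    push_neg at hcon
    obtain ⟨ζ, hζ, hfζ⟩ := hball (mem_ball_zero_iff.2 hcon)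
    set y : ℂ := mob z ζ with hy
    have hζ1 : ‖ζ‖ < 1 := mem_ball_zero_iff.mp hζ.1
    have hyS : y ∈ S := by
      refine ⟨mem_ball_zero_iff.2 (mob_mem hz1 hζ1), ?_⟩
      simp only [mem_singleton_iff]
      intro hcon2
      apply hζ.2
      have := mob_mob hz1 hζ1
      rw [hy] at hcon2
      rw [hcon2, mob_self] at this
      simp [← this]
    have hHy : H y = H z := by
      rw [hHeq y hyS.2]
      show f (mob z (mob z ζ)) = H z
      rw [mob_mob hz1 hζ1, hfζ]
    have hyz : y ≠ z := hyS.2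
    have haz : AnalyticAt ℂ H z := hdH.analyticAt hc
    have hay : AnalyticAt ℂ H y := hdH.analyticAt (isOpen_ball.mem_nhds hyS.1)
    rcases haz.eventually_constant_or_nhds_le_map_nhds with hcz | hmz
    · -- H eventually constant near z: contradicts injectivity
      have h1 : ∀ᶠ w in 𝓝[≠] z, H w = H z ∧ w ∈ ball (0:ℂ) 1 ∧ w ≠ z := by
        filter_upwards [mem_nhdsWithin_of_mem_nhds hcz,
          mem_nhdsWithin_of_mem_nhds (isOpen_ball.mem_nhds hzmem),
          self_mem_nhdsWithin] with w hw1 hw2 hw3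
        exact ⟨hw1, hw2, hw3⟩
      obtain ⟨w₁, hw₁⟩ := h1.exists
      have h2 : ∀ᶠ w in 𝓝[≠] z, (H w = H z ∧ w ∈ ball (0:ℂ) 1 ∧ w ≠ z) ∧ w ≠ w₁ := by
        filter_upwards [h1, mem_nhdsWithin_of_mem_nhds (eventually_ne_nhds
          (show z ≠ w₁ from fun h => hw₁.2.2 h.symm))] with w ha hb'
        exact ⟨ha, hb'⟩
      obtain ⟨w₂, hw₂⟩ := h2.exists
      have := hHinj ⟨hw₁.2.1, hw₁.2.2⟩ ⟨hw₂.1.2.1, hw₂.1.2.2⟩ (by rw [hw₁.1, hw₂.1.1])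
      exact hw₂.2 this.symm
    rcases hay.eventually_constant_or_nhds_le_map_nhds with hcy | hmy
    · -- H eventually constant near y: contradicts injectivity
      have h1 : ∀ᶠ w in 𝓝[≠] y, H w = H y ∧ w ∈ ball (0:ℂ) 1 ∧ w ≠ z := by
        filter_upwards [mem_nhdsWithin_of_mem_nhds hcy,
          mem_nhdsWithin_of_mem_nhds (isOpen_ball.mem_nhds hyS.1),
          mem_nhdsWithin_of_mem_nhds (eventually_ne_nhds hyz)] with w hw1 hw2 hw3
        exact ⟨hw1, hw2, hw3⟩
      obtain ⟨w₁, hw₁, hwne⟩ := (h1.and self_mem_nhdsWithin).exists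
      have := hHinj ⟨hw₁.2.1, hw₁.2.2⟩ hyS hw₁.1
      exact hwne this
    -- both open: disjoint neighborhoods map onto overlapping neighborhoods of H z
    have hdzy : 0 < dist z y := dist_pos.2 (Ne.symm hyz)
    set r₁ : ℝ := min (dist z y / 2) (1 - ‖z‖) with hr₁
    set r₂ : ℝ := min (dist z y / 2) (1 - ‖y‖) with hr₂
    have hy1 : ‖y‖ < 1 := mem_ball_zero_iff.mp hyS.1
    have hr₁0 : 0 < r₁ := lt_min (by linarith) (by linarith)
    have hr₂0 : 0 < r₂ := lt_min (by linarith) (by linarith)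
    have hUsub : ball z r₁ ⊆ ball (0:ℂ) 1 := by
      intro w hw
      rw [mem_ball] at hw ⊢
      calc dist w 0 ≤ dist w z + dist z 0 := dist_triangle _ _ _
        _ < r₁ + ‖z‖ := by
            rw [show dist z 0 = ‖z‖ by simp [Complex.dist_eq]]
            exact add_lt_add_left hw _
        _ ≤ 1 := by have := min_le_right (dist z y / 2) (1 - ‖z‖); linarith
    have hVsub : ball y r₂ ⊆ ball (0:ℂ) 1 := by
      intro w hw
      rw [mem_ball] at hw ⊢
      calc dist w 0 ≤ dist w y + dist y 0 := dist_triangle _ _ _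
        _ < r₂ + ‖y‖ := by
            rw [show dist y 0 = ‖y‖ by simp [Complex.dist_eq]]
            exact add_lt_add_left hw _
        _ ≤ 1 := by have := min_le_right (dist z y / 2) (1 - ‖y‖); linarith
    have hzV : z ∉ ball y r₂ := by
      intro hmem
      rw [mem_ball] at hmem
      have h1 : r₂ ≤ dist z y / 2 := min_le_left _ _
      have := dist_comm z y
      linarith [hmem, h1]
    have hdisj : ∀ x, x ∈ ball z r₁ → x ∉ ball y r₂ := by
      intro x hx hx'
      rw [mem_ball] at hx hx'
      have h1 : r₁ ≤ dist z y / 2 := min_le_left _ _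
      have h2 : r₂ ≤ dist z y / 2 := min_le_left _ _
      have htri : dist z y ≤ dist x z + dist x y := by
        calc dist z y ≤ dist z x + dist x y := dist_triangle _ _ _
          _ = dist x z + dist x y := by rw [dist_comm z x]
      linarith
    have himgU : H '' ball z r₁ ∈ 𝓝 (H z) := hmz (image_mem_map (ball_mem_nhds z hr₁0))
    have himgV : H '' ball y r₂ ∈ 𝓝 (H z) := by
      rw [← hHy]
      exact hmy (image_mem_map (ball_mem_nhds y hr₂0))
    have hT : (H '' ball z r₁ ∩ H '' ball y r₂) ∩ {H z}ᶜ ∈ 𝓝[≠] (H z) :=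
      inter_mem (mem_nhdsWithin_of_mem_nhds (inter_mem himgU himgV)) self_mem_nhdsWithin
    obtain ⟨w', ⟨⟨⟨x, hxU, hxw⟩, ⟨x', hx'V, hx'w⟩⟩, hw'ne⟩⟩ := Filter.nonempty_of_mem hT
    have hxz : x ≠ z := by
      intro h; exact hw'ne (by rw [← hxw, h]; exact rfl)
    have hx'z : x' ≠ z := fun h => hzV (h ▸ hx'V)
    have hxx' : x = x' := hHinj ⟨hUsub hxU, hxz⟩ ⟨hVsub hx'V, hx'z⟩ (by rw [hxw, hx'w])
    exact hdisj x hxU (hxx' ▸ hx'V)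
  rw [div_le_iff₀ hb]
  calc a ≤ ‖H z‖ := hkey
    _ ≤ b * ‖z‖ := hschwarz
    _ = ‖z‖ * b := mul_comm _ _

end Aux

/-- The squeezing function of the punctured unit disk `𝔻 \ {0}` is `|z|`. -/
theorem squeezingFun_punctured_disk (z : ℂ)
    (hz : z ∈ ball (0 : ℂ) 1 \ {0}) :
    squeezingFun1 (ball (0 : ℂ) 1 \ {0}) z = ‖z‖ := by
  have hz1 : ‖z‖ < 1 := mem_ball_zero_iff.mp hz.1
  have hz0 : z ≠ 0 := hz.2
  rw [squeezingFun1]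
  have hub : ∀ t ∈ {t : ℝ | ∃ (f : ℂ → ℂ) (a b : ℝ), 0 < a ∧ 0 < b ∧
      DifferentiableOn ℂ f (ball (0:ℂ) 1 \ {0}) ∧ Set.InjOn f (ball (0:ℂ) 1 \ {0}) ∧ f z = 0 ∧
      ball (0 : ℂ) a ⊆ f '' (ball (0:ℂ) 1 \ {0}) ∧
      f '' (ball (0:ℂ) 1 \ {0}) ⊆ ball (0 : ℂ) b ∧ t = a / b}, t ≤ ‖z‖ := by
    rintro t ⟨f, a, b, ha, hb, hd, hinj, hfz, hball, himg, rfl⟩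
    exact squeeze_le hz1 hz0 ha hb hd hinj hfz hball himg
  exact le_antisymm (csSup_le ⟨_, abs_mem_squeezeSet hz⟩ hub)
    (le_csSup ⟨‖z‖, hub⟩ (abs_mem_squeezeSet hz))
end

section
/- Let 0 < r < 1, y ∈ A_r, and define f(z,y) = ω(z,y)/(|y| ω(z, 1/conj(y))) using the Schottky-Klein prime function ω of A_r. Then for every z with |z| = r, |f(z,y)| = |y|. That is, the conformal map f(·,y) of A_r onto a circularly slit disk sends the inner boundary circle to an arc of the circle of radius |y|. -/
noncomputable def skFactor (r : ℝ) (z y : ℂ) (n : ℕ) : ℂ :=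
  ((z - (r : ℂ) ^ (2 * (n + 1)) * y) * (y - (r : ℂ) ^ (2 * (n + 1)) * z)) /
  ((z - (r : ℂ) ^ (2 * (n + 1)) * z) * (y - (r : ℂ) ^ (2 * (n + 1)) * y))

noncomputable def skPrime (r : ℝ) (z y : ℂ) : ℂ :=
  (z - y) * ∏' n : ℕ, skFactor r z y n

def annulus (r : ℝ) : Set ℂ := {w : ℂ | r < ‖w‖ ∧ ‖w‖ < 1}

/-! ### Auxiliary lemmas -/

lemma sk_sub_ne_zero {a b : ℂ} (h : ‖b‖ < ‖a‖) : a - b ≠ 0 := by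
  intro hab
  rw [sub_eq_zero] at hab
  subst hab
  exact lt_irrefl _ h

lemma sk_q_norm {r : ℝ} (hr0 : 0 < r) (n : ℕ) : ‖((r : ℂ) ^ (2 * (n + 1)))‖ = r ^ (2 * (n + 1)) := by
  rw [norm_pow, Complex.norm_real, Real.norm_eq_abs, abs_of_pos hr0]

lemma sk_q_le {r : ℝ} (hr0 : 0 < r) (hr1 : r < 1) (n : ℕ) :
    r ^ (2 * (n + 1)) ≤ r ^ 2 :=
  pow_le_pow_of_le_one hr0.le hr1.le (by omega)

lemma sk_one_sub_q_ne {r : ℝ} (hr0 : 0 < r) (hr1 : r < 1) (n : ℕ) :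
    (1 : ℂ) - (r : ℂ) ^ (2 * (n + 1)) ≠ 0 := by
  apply sk_sub_ne_zero
  rw [sk_q_norm hr0, norm_one]
  calc r ^ (2 * (n + 1)) ≤ r ^ 2 := sk_q_le hr0 hr1 n
    _ < 1 := pow_lt_one₀ hr0.le hr1 (by norm_num)

/-- Nonvanishing of each factor. -/
lemma skFactor_ne_zero {r : ℝ} {z y : ℂ} (hr0 : 0 < r) (hr1 : r < 1)
    (hz : z ≠ 0) (hy : y ≠ 0) (h1 : r ^ 2 * ‖y‖ < ‖z‖) (h2 : r ^ 2 * ‖z‖ < ‖y‖) (n : ℕ) :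
    skFactor r z y n ≠ 0 := by
  have hq := sk_q_le hr0 hr1 n
  have hqnn : (0:ℝ) ≤ r ^ (2 * (n + 1)) := by positivity
  have n1 : z - (r : ℂ) ^ (2 * (n + 1)) * y ≠ 0 := by
    apply sk_sub_ne_zero
    rw [norm_mul, sk_q_norm hr0]
    calc r ^ (2 * (n + 1)) * ‖y‖ ≤ r ^ 2 * ‖y‖ := by
          apply mul_le_mul_of_nonneg_right hq (norm_nonneg _)
      _ < ‖z‖ := h1
  have n2 : y - (r : ℂ) ^ (2 * (n + 1)) * z ≠ 0 := by
    apply sk_sub_ne_zero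
    rw [norm_mul, sk_q_norm hr0]
    calc r ^ (2 * (n + 1)) * ‖z‖ ≤ r ^ 2 * ‖z‖ := by
          apply mul_le_mul_of_nonneg_right hq (norm_nonneg _)
      _ < ‖y‖ := h2
  have d1 : z - (r : ℂ) ^ (2 * (n + 1)) * z ≠ 0 := by
    have : z - (r : ℂ) ^ (2 * (n + 1)) * z = z * (1 - (r : ℂ) ^ (2 * (n + 1))) := by ring
    rw [this]
    exact mul_ne_zero hz (sk_one_sub_q_ne hr0 hr1 n)
  have d2 : y - (r : ℂ) ^ (2 * (n + 1)) * y ≠ 0 := by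
    have : y - (r : ℂ) ^ (2 * (n + 1)) * y = y * (1 - (r : ℂ) ^ (2 * (n + 1))) := by ring
    rw [this]
    exact mul_ne_zero hy (sk_one_sub_q_ne hr0 hr1 n)
  exact div_ne_zero (mul_ne_zero n1 n2) (mul_ne_zero d1 d2)

/-- The factor minus one, in closed form. -/
lemma skFactor_sub_one {r : ℝ} {z y : ℂ} (hr0 : 0 < r) (hr1 : r < 1)
    (hz : z ≠ 0) (hy : y ≠ 0) (n : ℕ) :
    skFactor r z y n = 1 - (r : ℂ) ^ (2 * (n + 1)) * (z - y) ^ 2 /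
      (z * y * (1 - (r : ℂ) ^ (2 * (n + 1))) ^ 2) := by
  have hq := sk_one_sub_q_ne hr0 hr1 n
  rw [skFactor]
  have e1 : z - (r : ℂ) ^ (2 * (n + 1)) * z = z * (1 - (r : ℂ) ^ (2 * (n + 1))) := by ring
  have e2 : y - (r : ℂ) ^ (2 * (n + 1)) * y = y * (1 - (r : ℂ) ^ (2 * (n + 1))) := by ring
  rw [e1, e2]
  field_simp
  ring

/-- Summability of the logs of the factors. -/
lemma sk_log_summable {r : ℝ} {z y : ℂ} (hr0 : 0 < r) (hr1 : r < 1)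
    (hz : z ≠ 0) (hy : y ≠ 0) :
    Summable (fun n => Complex.log (skFactor r z y n)) := by
  set C : ℝ := r ^ 2 * ‖z - y‖ ^ 2 / (‖z‖ * ‖y‖ * (1 - r ^ 2) ^ 2) with hC
  have hr2 : (0:ℝ) ≤ r ^ 2 := by positivity
  have hr21 : r ^ 2 < 1 := pow_lt_one₀ hr0.le hr1 (by norm_num)
  have hCnn : 0 ≤ C := by
    apply div_nonneg (by positivity)
    have := norm_pos_iff.mpr hz
    have := norm_pos_iff.mpr hy
    positivity
  -- bound on ‖skFactor - 1‖
  have hbound : ∀ n, ‖skFactor r z y n - 1‖ ≤ C * (r ^ 2) ^ n := by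
    intro n
    rw [skFactor_sub_one hr0 hr1 hz hy n]
    have e : (1 : ℂ) - (r : ℂ) ^ (2 * (n + 1)) * (z - y) ^ 2 /
        (z * y * (1 - (r : ℂ) ^ (2 * (n + 1))) ^ 2) - 1 =
        -((r : ℂ) ^ (2 * (n + 1)) * (z - y) ^ 2 /
        (z * y * (1 - (r : ℂ) ^ (2 * (n + 1))) ^ 2)) := by ring
    rw [e, norm_neg, norm_div]
    have hq1 : ‖(1 : ℂ) - (r : ℂ) ^ (2 * (n + 1))‖ = 1 - r ^ (2 * (n + 1)) := by
      have : (1 : ℂ) - (r : ℂ) ^ (2 * (n + 1)) = ((1 - r ^ (2 * (n + 1)) : ℝ) : ℂ) := by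
        push_cast; ring
      rw [this, Complex.norm_real, Real.norm_eq_abs, abs_of_pos]
      have : r ^ (2 * (n + 1)) < 1 :=
        lt_of_le_of_lt (sk_q_le hr0 hr1 n) hr21
      linarith
    have hnum : ‖(r : ℂ) ^ (2 * (n + 1)) * (z - y) ^ 2‖ = r ^ (2 * (n + 1)) * ‖z - y‖ ^ 2 := by
      rw [norm_mul, norm_pow, norm_pow, Complex.norm_real, Real.norm_eq_abs, abs_of_pos hr0]
    have hden0 : ‖z * y * (1 - (r : ℂ) ^ (2 * (n + 1))) ^ 2‖
        = ‖z‖ * ‖y‖ * (1 - r ^ (2 * (n + 1))) ^ 2 := by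
      rw [norm_mul, norm_mul, norm_pow, hq1]
    rw [hnum, hden0]
    have hzp : (0:ℝ) < ‖z‖ := norm_pos_iff.mpr hz
    have hyp : (0:ℝ) < ‖y‖ := norm_pos_iff.mpr hy
    have hd1 : (0:ℝ) < (1 - r ^ 2) := by linarith
    have hqle : 1 - r ^ 2 ≤ 1 - r ^ (2 * (n + 1)) := by
      have := sk_q_le hr0 hr1 n; linarith
    have hden : ‖z‖ * ‖y‖ * (1 - r ^ 2) ^ 2 ≤ ‖z‖ * ‖y‖ * (1 - r ^ (2 * (n + 1))) ^ 2 := by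
      apply mul_le_mul_of_nonneg_left _ (by positivity)
      apply pow_le_pow_left₀ hd1.le hqle
    have hdenp : (0:ℝ) < ‖z‖ * ‖y‖ * (1 - r ^ 2) ^ 2 := by positivity
    have hpow : r ^ (2 * (n + 1)) = r ^ 2 * (r ^ 2) ^ n := by
      rw [← pow_mul, ← pow_add]; ring_nf
    calc r ^ (2 * (n + 1)) * ‖z - y‖ ^ 2 / (‖z‖ * ‖y‖ * (1 - r ^ (2 * (n + 1))) ^ 2)
        ≤ r ^ (2 * (n + 1)) * ‖z - y‖ ^ 2 / (‖z‖ * ‖y‖ * (1 - r ^ 2) ^ 2) := by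
          apply div_le_div_of_nonneg_left (by positivity) hdenp hden
      _ = C * (r ^ 2) ^ n := by rw [hC, hpow]; ring
  -- eventual smallness
  have htend : Filter.Tendsto (fun n : ℕ => C * (r ^ 2) ^ n) Filter.atTop (nhds 0) := by
    simpa using (tendsto_pow_atTop_nhds_zero_of_lt_one hr2 hr21).const_mul C
  have hev : ∀ᶠ n in Filter.atTop, C * (r ^ 2) ^ n ≤ 1 / 2 := by
    filter_upwards [htend.eventually (gt_mem_nhds (by norm_num : (0:ℝ) < 1/2))] with n hn
    exact hn.le
  apply Summable.of_norm_bounded_eventually_nat (g := fun n => 3 / 2 * (C * (r ^ 2) ^ n))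
  · exact (summable_geometric_of_lt_one hr2 hr21).mul_left C |>.mul_left (3/2)
  · filter_upwards [hev] with n hn
    have h12 : ‖skFactor r z y n - 1‖ ≤ 1 / 2 := le_trans (hbound n) hn
    have : Complex.log (skFactor r z y n) = Complex.log (1 + (skFactor r z y n - 1)) := by
      ring_nf
    rw [this]
    calc ‖Complex.log (1 + (skFactor r z y n - 1))‖
        ≤ 3 / 2 * ‖skFactor r z y n - 1‖ := Complex.norm_log_one_add_half_le_self h12
      _ ≤ 3 / 2 * (C * (r ^ 2) ^ n) := by
          apply mul_le_mul_of_nonneg_left (hbound n) (by norm_num)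

/-- The infinite product equals the exponential of the sum of logs; in particular it
converges and is nonzero. -/
lemma sk_hasProd {r : ℝ} {z y : ℂ} (hr0 : 0 < r) (hr1 : r < 1)
    (hz : z ≠ 0) (hy : y ≠ 0) (h1 : r ^ 2 * ‖y‖ < ‖z‖) (h2 : r ^ 2 * ‖z‖ < ‖y‖) :
    HasProd (skFactor r z y) (∏' n, skFactor r z y n) := by
  have := (Complex.hasProd_of_hasSum_log (fun n => skFactor_ne_zero hr0 hr1 hz hy h1 h2 n)
    (sk_log_summable hr0 hr1 hz hy).hasSum).multipliable.hasProd
  exact this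

lemma sk_tprod_ne_zero {r : ℝ} {z y : ℂ} (hr0 : 0 < r) (hr1 : r < 1)
    (hz : z ≠ 0) (hy : y ≠ 0) (h1 : r ^ 2 * ‖y‖ < ‖z‖) (h2 : r ^ 2 * ‖z‖ < ‖y‖) :
    (∏' n, skFactor r z y n) ≠ 0 := by
  have := Complex.cexp_tsum_eq_tprod (fun n => skFactor_ne_zero hr0 hr1 hz hy h1 h2 n)
    (sk_log_summable hr0 hr1 hz hy)
  rw [← this]
  exact Complex.exp_ne_zero _


/-- Closed form of the factor for the pair `(u, v⁻¹)`. -/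
lemma skFactor_inv_eq {r : ℝ} {u v : ℂ} (hr0 : 0 < r) (hr1 : r < 1)
    (hu : u ≠ 0) (hv : v ≠ 0) (n : ℕ) :
    skFactor r u v⁻¹ n =
      (u * v - (r : ℂ) ^ (2 * (n + 1))) * (1 - (r : ℂ) ^ (2 * (n + 1)) * (u * v)) /
        ((u * v) * (1 - (r : ℂ) ^ (2 * (n + 1))) ^ 2) := by
  have hq := sk_one_sub_q_ne hr0 hr1 n
  rw [skFactor]
  have e1 : u - (r : ℂ) ^ (2 * (n + 1)) * u = u * (1 - (r : ℂ) ^ (2 * (n + 1))) := by ring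
  have e2 : v⁻¹ - (r : ℂ) ^ (2 * (n + 1)) * v⁻¹ = v⁻¹ * (1 - (r : ℂ) ^ (2 * (n + 1))) := by ring
  rw [e1, e2]
  field_simp [hu, hv, hq]

/-- Closed form of the factor for the pair `(r²/u, v)`. -/
lemma skFactor_refl_eq {r : ℝ} {u v : ℂ} (hr0 : 0 < r) (hr1 : r < 1)
    (hu : u ≠ 0) (hv : v ≠ 0) (n : ℕ) :
    skFactor r ((r : ℂ) ^ 2 / u) v n =
      (u * v - (r : ℂ) ^ (2 * (n + 1)) * (r : ℂ) ^ 2) *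
        ((r : ℂ) ^ 2 - (r : ℂ) ^ (2 * (n + 1)) * (u * v)) /
        ((u * v) * (r : ℂ) ^ 2 * (1 - (r : ℂ) ^ (2 * (n + 1))) ^ 2) := by
  have hq := sk_one_sub_q_ne hr0 hr1 n
  have hrC : (r : ℂ) ≠ 0 := by
    simpa using hr0.ne'
  rw [skFactor]
  have e1 : (r : ℂ) ^ 2 / u - (r : ℂ) ^ (2 * (n + 1)) * ((r : ℂ) ^ 2 / u)
      = ((r : ℂ) ^ 2 / u) * (1 - (r : ℂ) ^ (2 * (n + 1))) := by ring
  have e2 : v - (r : ℂ) ^ (2 * (n + 1)) * v = v * (1 - (r : ℂ) ^ (2 * (n + 1))) := by ring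
  rw [e1, e2]
  field_simp [hu, hv, hq, hrC]

/-- The per-factor telescoping identity. -/
lemma sk_star {r : ℝ} {u v : ℂ} (hr0 : 0 < r) (hr1 : r < 1)
    (hu : u ≠ 0) (hv : v ≠ 0) (N : ℕ) :
    skFactor r ((r : ℂ) ^ 2 / u) v N * (1 - (r : ℂ) ^ (2 * (N + 1)) * (u * v)) *
        (u * v - (r : ℂ) ^ (2 * (N + 1))) =
      skFactor r u v⁻¹ N * (u * v - (r : ℂ) ^ (2 * (N + 1)) * (r : ℂ) ^ 2) *
        (1 - (r : ℂ) ^ (2 * N) * (u * v)) := by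
  have hq := sk_one_sub_q_ne hr0 hr1 N
  have hrC : (r : ℂ) ≠ 0 := by simpa using hr0.ne'
  have hs : u * v ≠ 0 := mul_ne_zero hu hv
  rw [skFactor_refl_eq hr0 hr1 hu hv, skFactor_inv_eq hr0 hr1 hu hv]
  have hqe : (r : ℂ) ^ (2 * (N + 1)) = (r : ℂ) ^ (2 * N) * (r : ℂ) ^ 2 := by
    rw [← pow_add]; ring_nf
  rw [hqe] at hq ⊢
  generalize (r : ℂ) ^ (2 * N) = p at hq ⊢
  field_simp

/-- Finite telescoping identity for partial products. -/
lemma sk_telescope {r : ℝ} {u v : ℂ} (hr0 : 0 < r) (hr1 : r < 1)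
    (hu : u ≠ 0) (hv : v ≠ 0) (hA : r ^ 2 < ‖u * v‖) (hB : ‖u * v‖ < 1) :
    ∀ N : ℕ,
      (∏ n ∈ Finset.range N, skFactor r ((r : ℂ) ^ 2 / u) v n) * (u * v - (r : ℂ) ^ 2) *
          (1 - (r : ℂ) ^ (2 * N) * (u * v)) =
        (∏ n ∈ Finset.range N, skFactor r u v⁻¹ n) * (u * v - (r : ℂ) ^ (2 * (N + 1))) *
          (1 - u * v) := by
  intro N
  induction N with
  | zero => norm_num
  | succ N ih =>
    have hqN : u * v - (r : ℂ) ^ (2 * (N + 1)) ≠ 0 := by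
      apply sk_sub_ne_zero
      rw [sk_q_norm hr0]
      exact lt_of_le_of_lt (sk_q_le hr0 hr1 N) hA
    have hpN : (1 : ℂ) - (r : ℂ) ^ (2 * N) * (u * v) ≠ 0 := by
      apply sk_sub_ne_zero
      rw [norm_one, norm_mul, norm_pow, Complex.norm_real, Real.norm_eq_abs, abs_of_pos hr0]
      calc r ^ (2 * N) * ‖u * v‖ ≤ 1 * ‖u * v‖ := by
            apply mul_le_mul_of_nonneg_right _ (norm_nonneg _)
            exact pow_le_one₀ hr0.le hr1.le
        _ < 1 := by rw [one_mul]; exact hB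
    have key := sk_star hr0 hr1 hu hv (v := v) N
    have expand : (r : ℂ) ^ (2 * (N + 1 + 1))
        = (r : ℂ) ^ (2 * (N + 1)) * (r : ℂ) ^ 2 := by
      rw [← pow_add]; ring_nf
    apply mul_right_cancel₀ hqN
    apply mul_right_cancel₀ hpN
    rw [Finset.prod_range_succ, Finset.prod_range_succ]
    calc (∏ n ∈ Finset.range N, skFactor r ((r : ℂ) ^ 2 / u) v n) *
            skFactor r ((r : ℂ) ^ 2 / u) v N * (u * v - (r : ℂ) ^ 2) *
            (1 - (r : ℂ) ^ (2 * (N + 1)) * (u * v)) * (u * v - (r : ℂ) ^ (2 * (N + 1))) *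
            (1 - (r : ℂ) ^ (2 * N) * (u * v))
        = ((∏ n ∈ Finset.range N, skFactor r ((r : ℂ) ^ 2 / u) v n) * (u * v - (r : ℂ) ^ 2) *
            (1 - (r : ℂ) ^ (2 * N) * (u * v))) *
            (skFactor r ((r : ℂ) ^ 2 / u) v N * (1 - (r : ℂ) ^ (2 * (N + 1)) * (u * v)) *
            (u * v - (r : ℂ) ^ (2 * (N + 1)))) := by ring
      _ = ((∏ n ∈ Finset.range N, skFactor r u v⁻¹ n) * (u * v - (r : ℂ) ^ (2 * (N + 1))) *
            (1 - u * v)) *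
            (skFactor r u v⁻¹ N * (u * v - (r : ℂ) ^ (2 * (N + 1)) * (r : ℂ) ^ 2) *
            (1 - (r : ℂ) ^ (2 * N) * (u * v))) := by rw [ih, key]
      _ = (∏ n ∈ Finset.range N, skFactor r u v⁻¹ n) * skFactor r u v⁻¹ N *
            (u * v - (r : ℂ) ^ (2 * (N + 1 + 1))) * (1 - u * v) *
            (u * v - (r : ℂ) ^ (2 * (N + 1))) * (1 - (r : ℂ) ^ (2 * N) * (u * v)) := by
            rw [expand]; ring

/-- The reflection identity `ω(r²/u, v) = v² ω(u, v⁻¹)`. -/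
lemma skPrime_reflect {r : ℝ} {u v : ℂ} (hr0 : 0 < r) (hr1 : r < 1)
    (hu : u ≠ 0) (hv : v ≠ 0) (hA : r ^ 2 < ‖u * v‖) (hB : ‖u * v‖ < 1) :
    skPrime r ((r : ℂ) ^ 2 / u) v = v ^ 2 * skPrime r u v⁻¹ := by
  have hrC : (r : ℂ) ≠ 0 := by simpa using hr0.ne'
  have hru : (r : ℂ) ^ 2 / u ≠ 0 := div_ne_zero (pow_ne_zero _ hrC) hu
  have hnu : (0:ℝ) < ‖u‖ := norm_pos_iff.mpr hu
  have hnv : (0:ℝ) < ‖v‖ := norm_pos_iff.mpr hv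
  have hsn : ‖u * v‖ = ‖u‖ * ‖v‖ := norm_mul u v
  have hr2 : (0:ℝ) < r ^ 2 := by positivity
  -- norms of the reflected point
  have hnru : ‖(r : ℂ) ^ 2 / u‖ = r ^ 2 / ‖u‖ := by
    rw [norm_div, norm_pow, Complex.norm_real, Real.norm_eq_abs, abs_of_pos hr0]
  have hnvinv : ‖v⁻¹‖ = ‖v‖⁻¹ := norm_inv v
  -- factor-nonvanishing hypotheses for the pair (r²/u, v)
  have hA1 : r ^ 2 * ‖v‖ < ‖(r : ℂ) ^ 2 / u‖ := by
    rw [hnru, lt_div_iff₀ hnu]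
    calc r ^ 2 * ‖v‖ * ‖u‖ = r ^ 2 * (‖u‖ * ‖v‖) := by ring
      _ < r ^ 2 * 1 := by
          apply mul_lt_mul_of_pos_left _ hr2
          rw [← hsn]; exact hB
      _ = r ^ 2 := by ring
  have hA2 : r ^ 2 * ‖(r : ℂ) ^ 2 / u‖ < ‖v‖ := by
    rw [hnru, ← mul_div_assoc, div_lt_iff₀ hnu]
    have h := hA; rw [hsn] at h
    have hle : r ^ 2 ≤ 1 := pow_le_one₀ hr0.le hr1.le
    nlinarith [hnv, hnu]
  -- factor-nonvanishing hypotheses for the pair (u, v⁻¹)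
  have hvinv : v⁻¹ ≠ 0 := inv_ne_zero hv
  have hB1 : r ^ 2 * ‖v⁻¹‖ < ‖u‖ := by
    rw [hnvinv, ← div_eq_mul_inv, div_lt_iff₀ hnv]
    rw [hsn] at hA; linarith
  have hB2 : r ^ 2 * ‖u‖ < ‖v⁻¹‖ := by
    rw [hnvinv, ← one_div, lt_div_iff₀ hnv]
    have h := hB; rw [hsn] at h
    have hle : r ^ 2 ≤ 1 := pow_le_one₀ hr0.le hr1.le
    nlinarith [hnv, hnu]
  -- the two products
  have ha := sk_hasProd hr0 hr1 hru hv hA1 hA2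
  have hb := sk_hasProd hr0 hr1 hu hvinv hB1 hB2
  -- limits
  have hr2n : ‖(r : ℂ) ^ 2‖ < 1 := by
    rw [norm_pow, Complex.norm_real, Real.norm_eq_abs, abs_of_pos hr0]
    exact pow_lt_one₀ hr0.le hr1 (by norm_num)
  have T3 : Filter.Tendsto (fun N : ℕ => (r : ℂ) ^ (2 * N) * (u * v))
      Filter.atTop (nhds 0) := by
    have : Filter.Tendsto (fun N : ℕ => ((r : ℂ) ^ 2) ^ N) Filter.atTop (nhds 0) :=
      tendsto_pow_atTop_nhds_zero_of_norm_lt_one hr2n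
    simpa [pow_mul] using this.mul_const (u * v)
  have T4 : Filter.Tendsto (fun N : ℕ => (r : ℂ) ^ (2 * (N + 1)))
      Filter.atTop (nhds 0) := by
    have h1 : Filter.Tendsto (fun N : ℕ => ((r : ℂ) ^ 2) ^ (N + 1)) Filter.atTop (nhds 0) :=
      (tendsto_pow_atTop_nhds_zero_of_norm_lt_one hr2n).comp (Filter.tendsto_add_atTop_nat 1)
    simpa [pow_mul] using h1
  have TL : Filter.Tendsto
      (fun N : ℕ => (∏ n ∈ Finset.range N, skFactor r ((r : ℂ) ^ 2 / u) v n) *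
        (u * v - (r : ℂ) ^ 2) * (1 - (r : ℂ) ^ (2 * N) * (u * v)))
      Filter.atTop
      (nhds ((∏' n, skFactor r ((r : ℂ) ^ 2 / u) v n) * (u * v - (r : ℂ) ^ 2) * (1 - 0))) :=
    (ha.tendsto_prod_nat.mul_const _).mul (tendsto_const_nhds.sub T3)
  have TR : Filter.Tendsto
      (fun N : ℕ => (∏ n ∈ Finset.range N, skFactor r u v⁻¹ n) *
        (u * v - (r : ℂ) ^ (2 * (N + 1))) * (1 - u * v))
      Filter.atTop
      (nhds ((∏' n, skFactor r u v⁻¹ n) * (u * v - 0) * (1 - u * v))) :=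
    (hb.tendsto_prod_nat.mul (tendsto_const_nhds.sub T4)).mul_const _
  have heq := tendsto_nhds_unique
    (TL.congr (fun N => sk_telescope hr0 hr1 hu hv hA hB N)) TR
  simp only [sub_zero, mul_one] at heq
  -- conclude
  have hsr : u * v - (r : ℂ) ^ 2 ≠ 0 := by
    apply sk_sub_ne_zero
    rw [norm_pow, Complex.norm_real, Real.norm_eq_abs, abs_of_pos hr0]
    exact hA
  rw [skPrime, skPrime]
  apply mul_right_cancel₀ hsr
  calc ((r : ℂ) ^ 2 / u - v) * (∏' n, skFactor r ((r : ℂ) ^ 2 / u) v n) *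
        (u * v - (r : ℂ) ^ 2)
      = ((r : ℂ) ^ 2 / u - v) *
        ((∏' n, skFactor r ((r : ℂ) ^ 2 / u) v n) * (u * v - (r : ℂ) ^ 2)) := by ring
    _ = ((r : ℂ) ^ 2 / u - v) *
        ((∏' n, skFactor r u v⁻¹ n) * (u * v) * (1 - u * v)) := by rw [heq]
    _ = v ^ 2 * ((u - v⁻¹) * ∏' n, skFactor r u v⁻¹ n) * (u * v - (r : ℂ) ^ 2) := by
        field_simp
        ring

/-- Conjugation symmetry of the prime function. -/
lemma skPrime_conj {r : ℝ} {z y : ℂ} (hr0 : 0 < r) (hr1 : r < 1)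
    (hz : z ≠ 0) (hy : y ≠ 0) (h1 : r ^ 2 * ‖y‖ < ‖z‖) (h2 : r ^ 2 * ‖z‖ < ‖y‖) :
    (starRingEnd ℂ) (skPrime r z y) =
      skPrime r ((starRingEnd ℂ) z) ((starRingEnd ℂ) y) := by
  have ha := sk_hasProd hr0 hr1 hz hy h1 h2
  have hmap := ha.map (starRingEnd ℂ) Complex.continuous_conj
  have hfun : (starRingEnd ℂ) ∘ skFactor r z y
      = skFactor r ((starRingEnd ℂ) z) ((starRingEnd ℂ) y) := by
    funext n
    simp only [Function.comp, skFactor, map_div₀, map_mul, map_sub, map_pow,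
      Complex.conj_ofReal]
  rw [hfun] at hmap
  rw [skPrime, skPrime, map_mul, map_sub, hmap.tprod_eq]

/-- Crowdy's conformal map `f(z,y) = ω(z,y)/(|y| ω(z, 1/conj y))` of `A_r` onto a
circularly slit disk sends the inner boundary circle `|z| = r` to an arc of the
circle of radius `|y|`. -/
theorem crowdy_map_inner_circle (r : ℝ) (hr0 : 0 < r) (hr1 : r < 1)
    (y : ℂ) (hy : y ∈ annulus r) (z : ℂ) (hz : ‖z‖ = r) :
    ‖skPrime r z y /
      ((‖y‖ : ℂ) * skPrime r z ((starRingEnd ℂ) y)⁻¹)‖ = ‖y‖ := by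
  obtain ⟨hyr, hy1⟩ := hy
  have hznorm : ‖z‖ = r := hz
  have hynorm : ‖y‖ = ‖y‖ := rfl
  have hz0 : z ≠ 0 := by
    intro h; rw [h] at hz; simp at hz; exact hr0.ne' hz.symm
  have hy0 : y ≠ 0 := by
    intro h; rw [h] at hyr; simp at hyr; linarith
  have hcy0 : (starRingEnd ℂ) y ≠ 0 := by simpa using hy0
  have hr2r : r ^ 2 < r := by nlinarith
  -- conj z = r^2 / z
  have hcz : (starRingEnd ℂ) z = (r : ℂ) ^ 2 / z := by
    rw [eq_div_iff hz0, mul_comm, Complex.mul_conj, Complex.normSq_eq_norm_sq, hz]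
    push_cast; ring
  -- hypotheses for the pair (z, y)
  have h1 : r ^ 2 * ‖y‖ < ‖z‖ := by
    rw [hznorm, hynorm]; nlinarith
  have h2 : r ^ 2 * ‖z‖ < ‖y‖ := by
    rw [hznorm, hynorm]; nlinarith
  -- hypotheses for the reflection identity with u := z, v := conj y
  have hnzy : ‖z * (starRingEnd ℂ) y‖ = r * ‖y‖ := by
    rw [norm_mul, hznorm, RCLike.norm_conj, hynorm]
  have hA : r ^ 2 < ‖z * (starRingEnd ℂ) y‖ := by
    rw [hnzy]; nlinarith
  have hB : ‖z * (starRingEnd ℂ) y‖ < 1 := by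
    rw [hnzy]; nlinarith
  -- the key identity
  have hrefl := skPrime_reflect hr0 hr1 hz0 hcy0 hA hB
  have hconj := skPrime_conj hr0 hr1 hz0 hy0 h1 h2
  rw [hcz] at hconj
  have hkey : skPrime r z ((starRingEnd ℂ) y)⁻¹
      = (starRingEnd ℂ) (skPrime r z y) / ((starRingEnd ℂ) y) ^ 2 := by
    rw [eq_div_iff (pow_ne_zero 2 hcy0), hconj, hrefl]; ring
  -- nonvanishing of skPrime r z y
  have homega : skPrime r z y ≠ 0 := by
    rw [skPrime]
    apply mul_ne_zero
    · rw [sub_ne_zero]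
      intro h
      rw [h, hynorm] at hznorm
      linarith
    · exact sk_tprod_ne_zero hr0 hr1 hz0 hy0 h1 h2
  have habsy : ‖y‖ ≠ 0 := by
    intro h; exact hy0 (norm_eq_zero.mp h)
  have habso : ‖skPrime r z y‖ ≠ 0 := by
    intro h; exact homega (norm_eq_zero.mp h)
  rw [hkey, norm_div, norm_mul, norm_div, norm_pow, RCLike.norm_conj, RCLike.norm_conj,
    Complex.norm_real, Real.norm_of_nonneg (norm_nonneg y)]
  field_simp
end

section
/- Lower bound for the squeezing function of a product domain: if Ω = Ω₁ × ⋯ × Ωₙ ⊂ ℂⁿ with each Ωᵢ a bounded domain in ℂ, then for z = (z₁,…,zₙ) ∈ Ω, S_Ω(z) ≥ (S_{Ω₁}(z₁)^{−2} + ⋯ + S_{Ωₙ}(zₙ)^{−2})^{−1/2}. -/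
open Metric Set

noncomputable def squeezingFun (n : ℕ) (Ω : Set (EuclideanSpace ℂ (Fin n)))
    (z : EuclideanSpace ℂ (Fin n)) : ℝ :=
  sSup {t : ℝ | ∃ (f : EuclideanSpace ℂ (Fin n) → EuclideanSpace ℂ (Fin n)) (a b : ℝ),
    0 < a ∧ 0 < b ∧ DifferentiableOn ℂ f Ω ∧ Set.InjOn f Ω ∧ f z = 0 ∧
    ball (0 : EuclideanSpace ℂ (Fin n)) a ⊆ f '' Ω ∧
    f '' Ω ⊆ ball (0 : EuclideanSpace ℂ (Fin n)) b ∧ t = a / b}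

/-- In a normed space containing a unit vector, `ball 0 a ⊆ ball 0 b` with `0 < a`
forces `a ≤ b`. -/
lemma aux_ball_radius_le {V : Type*} [NormedAddCommGroup V] [NormedSpace ℝ V]
    (x : V) (hx : ‖x‖ = 1) {a b : ℝ} (ha : 0 < a)
    (h : ball (0 : V) a ⊆ ball (0 : V) b) : a ≤ b := by
  by_contra hab
  push_neg at hab
  have hb : 0 < b := by
    have h0 : (0 : V) ∈ ball (0 : V) b := h (by simpa using ha)
    simpa using h0
  set r : ℝ := (a + b) / 2 with hr
  have hrx : ‖r • x‖ = r := by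
    rw [norm_smul, hx, mul_one, Real.norm_eq_abs, abs_of_pos (by positivity)]
  have hmem : r • x ∈ ball (0 : V) a := by
    simp only [mem_ball, dist_zero_right, hrx]
    linarith
  have := h hmem
  simp only [mem_ball, dist_zero_right, hrx] at this
  linarith

/-- Each coordinate of a Euclidean vector has norm at most the norm of the vector. -/
lemma aux_coord_le {n : ℕ} (v : EuclideanSpace ℂ (Fin n)) (i : Fin n) : ‖v i‖ ≤ ‖v‖ := by
  rw [EuclideanSpace.norm_eq]
  have h1 : ‖v i‖ ^ 2 ≤ ∑ j, ‖v j‖ ^ 2 :=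
    Finset.single_le_sum (f := fun j => ‖v j‖ ^ 2) (fun j _ => by positivity)
      (Finset.mem_univ i)
  calc ‖v i‖ = Real.sqrt (‖v i‖ ^ 2) := by
        rw [Real.sqrt_sq (norm_nonneg _)]
    _ ≤ _ := Real.sqrt_le_sqrt h1

/-- The product construction: scaled product of squeezing maps gives a member of the
defining set of the product squeezing function. -/
lemma aux_product_mem (n : ℕ) (hn : 0 < n) (Ωs : Fin n → Set ℂ)
    (f : Fin n → ℂ → ℂ) (a b : Fin n → ℝ)
    (ha : ∀ i, 0 < a i) (hb : ∀ i, 0 < b i)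
    (hdiff : ∀ i, DifferentiableOn ℂ (f i) (Ωs i))
    (hinj : ∀ i, Set.InjOn (f i) (Ωs i))
    (z : EuclideanSpace ℂ (Fin n)) (hz0 : ∀ i, f i (z i) = 0)
    (hball : ∀ i, ball (0 : ℂ) (a i) ⊆ f i '' Ωs i)
    (hsub : ∀ i, f i '' Ωs i ⊆ ball (0 : ℂ) (b i)) :
    (Real.sqrt (∑ i, (a i / b i)⁻¹ ^ 2))⁻¹ ∈
      {t : ℝ | ∃ (F : EuclideanSpace ℂ (Fin n) → EuclideanSpace ℂ (Fin n)) (A B : ℝ),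
        0 < A ∧ 0 < B ∧
        DifferentiableOn ℂ F {w : EuclideanSpace ℂ (Fin n) | ∀ i, w i ∈ Ωs i} ∧
        Set.InjOn F {w : EuclideanSpace ℂ (Fin n) | ∀ i, w i ∈ Ωs i} ∧ F z = 0 ∧
        ball (0 : EuclideanSpace ℂ (Fin n)) A ⊆
          F '' {w : EuclideanSpace ℂ (Fin n) | ∀ i, w i ∈ Ωs i} ∧
        F '' {w : EuclideanSpace ℂ (Fin n) | ∀ i, w i ∈ Ωs i} ⊆
          ball (0 : EuclideanSpace ℂ (Fin n)) B ∧
        t = A / B} := by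
  classical
  set Ω : Set (EuclideanSpace ℂ (Fin n)) := {w | ∀ i, w i ∈ Ωs i} with hΩ
  set F : EuclideanSpace ℂ (Fin n) → EuclideanSpace ℂ (Fin n) :=
    fun w => WithLp.toLp 2 (fun i => ((a i : ℂ))⁻¹ * f i (w i)) with hF
  set B : ℝ := Real.sqrt (∑ i, (b i / a i) ^ 2) with hB
  have haC : ∀ i, (a i : ℂ) ≠ 0 := fun i => by
    exact_mod_cast (ha i).ne'
  have hBpos : 0 < B := by
    apply Real.sqrt_pos.2
    apply Finset.sum_pos (fun i _ => pow_pos (div_pos (hb i) (ha i)) 2)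
    exact Finset.univ_nonempty_iff.2 ⟨⟨0, hn⟩⟩
  refine ⟨F, 1, B, one_pos, hBpos, ?_, ?_, ?_, ?_, ?_, ?_⟩
  · -- differentiability
    rw [differentiableOn_euclidean]
    intro i
    have hproj : DifferentiableOn ℂ (fun w : EuclideanSpace ℂ (Fin n) => w i) Ω :=
      differentiableOn_euclidean.1 differentiableOn_id i
    have hcomp : DifferentiableOn ℂ (fun w : EuclideanSpace ℂ (Fin n) => f i (w i)) Ω :=
      (hdiff i).comp hproj (fun w hw => hw i)
    exact hcomp.const_mul ((a i : ℂ))⁻¹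
  · -- injectivity
    intro w hw w' hw' hww
    refine PiLp.ext fun i => ?_
    have hcoord : ((a i : ℂ))⁻¹ * f i (w i) = ((a i : ℂ))⁻¹ * f i (w' i) :=
      congrArg (fun x : EuclideanSpace ℂ (Fin n) => x i) hww
    have : f i (w i) = f i (w' i) :=
      mul_left_cancel₀ (inv_ne_zero (haC i)) hcoord
    exact hinj i (hw i) (hw' i) this
  · -- F z = 0
    refine PiLp.ext fun i => ?_
    show ((a i : ℂ))⁻¹ * f i (z i) = 0
    rw [hz0 i, mul_zero]
  · -- ball 1 ⊆ image
    intro v hv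
    simp only [mem_ball, dist_zero_right] at hv
    have hva : ∀ i, (a i : ℂ) * v i ∈ ball (0 : ℂ) (a i) := by
      intro i
      simp only [mem_ball, dist_zero_right, norm_mul, Complex.norm_real,
        Real.norm_eq_abs, abs_of_pos (ha i)]
      calc a i * ‖v i‖ ≤ a i * ‖v‖ := by
            exact mul_le_mul_of_nonneg_left (aux_coord_le v i) (ha i).le
        _ < a i * 1 := by exact mul_lt_mul_of_pos_left hv (ha i)
        _ = a i := mul_one _
    have hch : ∀ i, ∃ w ∈ Ωs i, f i w = (a i : ℂ) * v i := by
      intro i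
      obtain ⟨w, hw, hfw⟩ := hball i (hva i)
      exact ⟨w, hw, hfw⟩
    choose w hw hfw using hch
    refine ⟨WithLp.toLp 2 (fun i => w i), hw, ?_⟩
    refine PiLp.ext fun i => ?_
    show ((a i : ℂ))⁻¹ * f i (w i) = v i
    rw [hfw i, inv_mul_cancel_left₀ (haC i)]
  · -- image ⊆ ball B
    rintro _ ⟨w, hw, rfl⟩
    simp only [mem_ball, dist_zero_right]
    rw [EuclideanSpace.norm_eq]
    have hlt : ∑ i, ‖((a i : ℂ))⁻¹ * f i (w i)‖ ^ 2 < ∑ i, (b i / a i) ^ 2 := by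
      apply Finset.sum_lt_sum_of_nonempty (Finset.univ_nonempty_iff.2 ⟨⟨0, hn⟩⟩)
      intro i _
      have hfb : ‖f i (w i)‖ < b i := by
        have := hsub i ⟨w i, hw i, rfl⟩
        simpa [mem_ball, dist_zero_right] using this
      have hnorm : ‖((a i : ℂ))⁻¹ * f i (w i)‖ = (a i)⁻¹ * ‖f i (w i)‖ := by
        rw [norm_mul, norm_inv, Complex.norm_real, Real.norm_eq_abs,
          abs_of_pos (ha i)]
      rw [hnorm, div_eq_inv_mul]
      have h1 : (a i)⁻¹ * ‖f i (w i)‖ < (a i)⁻¹ * b i :=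
        mul_lt_mul_of_pos_left hfb (inv_pos.2 (ha i))
      have h2 : 0 ≤ (a i)⁻¹ * ‖f i (w i)‖ := mul_nonneg (inv_nonneg.2 (ha i).le) (norm_nonneg _)
      nlinarith
    calc Real.sqrt (∑ i, ‖((a i : ℂ))⁻¹ * f i (w i)‖ ^ 2)
        < Real.sqrt (∑ i, (b i / a i) ^ 2) := by
          exact Real.sqrt_lt_sqrt (Finset.sum_nonneg fun i _ => sq_nonneg _) hlt
      _ = B := rfl
  · -- value
    rw [hB, one_div]
    congr 1
    congr 1
    apply Finset.sum_congr rfl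
    intro i _
    rw [inv_div]

/-- Lower bound for the squeezing function of a product domain:
`S_Ω(z) ≥ (S_{Ω₁}(z₁)^{-2} + ⋯ + S_{Ωₙ}(zₙ)^{-2})^{-1/2}`. -/
theorem squeezingFun_product_lower_bound (n : ℕ) (Ωs : Fin n → Set ℂ)
    (hopen : ∀ i, IsOpen (Ωs i)) (hconn : ∀ i, IsConnected (Ωs i))
    (hbdd : ∀ i, Bornology.IsBounded (Ωs i))
    (z : EuclideanSpace ℂ (Fin n)) (hz : ∀ i, z i ∈ Ωs i) :
    (Real.sqrt (∑ i, (squeezingFun1 (Ωs i) (z i))⁻¹ ^ 2))⁻¹ ≤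
      squeezingFun n {w : EuclideanSpace ℂ (Fin n) | ∀ i, w i ∈ Ωs i} z := by
  classical
  set T : Set ℝ := {t : ℝ | ∃ (f : EuclideanSpace ℂ (Fin n) → EuclideanSpace ℂ (Fin n))
      (a b : ℝ),
    0 < a ∧ 0 < b ∧ DifferentiableOn ℂ f {w : EuclideanSpace ℂ (Fin n) | ∀ i, w i ∈ Ωs i} ∧
    Set.InjOn f {w : EuclideanSpace ℂ (Fin n) | ∀ i, w i ∈ Ωs i} ∧ f z = 0 ∧
    ball (0 : EuclideanSpace ℂ (Fin n)) a ⊆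
      f '' {w : EuclideanSpace ℂ (Fin n) | ∀ i, w i ∈ Ωs i} ∧
    f '' {w : EuclideanSpace ℂ (Fin n) | ∀ i, w i ∈ Ωs i} ⊆
      ball (0 : EuclideanSpace ℂ (Fin n)) b ∧ t = a / b} with hT
  have hgoal : squeezingFun n {w : EuclideanSpace ℂ (Fin n) | ∀ i, w i ∈ Ωs i} z = sSup T :=
    rfl
  rcases Nat.eq_zero_or_pos n with hn | hn
  · -- trivial case n = 0
    subst hn
    have : (∑ i : Fin 0, (squeezingFun1 (Ωs i) (z i))⁻¹ ^ 2) = 0 := by simp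
    rw [this, Real.sqrt_zero, inv_zero, hgoal]
    apply Real.sSup_nonneg
    rintro t ⟨f, a, b, ha, hb, -, -, -, -, -, rfl⟩
    positivity
  -- main case
  set Ti : Fin n → Set ℝ := fun i => {t : ℝ | ∃ (f : ℂ → ℂ) (a b : ℝ), 0 < a ∧ 0 < b ∧
    DifferentiableOn ℂ f (Ωs i) ∧ Set.InjOn f (Ωs i) ∧ f (z i) = 0 ∧
    ball (0 : ℂ) a ⊆ f '' (Ωs i) ∧ f '' (Ωs i) ⊆ ball (0 : ℂ) b ∧ t = a / b} with hTi
  have hSi : ∀ i, squeezingFun1 (Ωs i) (z i) = sSup (Ti i) := fun i => rfl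
  -- each Ti is nonempty
  have hne : ∀ i, (Ti i).Nonempty := by
    intro i
    obtain ⟨ε, hε, hball⟩ := Metric.isOpen_iff.1 (hopen i) (z i) (hz i)
    obtain ⟨r, hr0, hr⟩ := (hbdd i).subset_ball_lt 0 (z i)
    refine ⟨ε / r, fun w => w - z i, ε, r, hε, hr0, ?_, ?_, ?_, ?_, ?_, rfl⟩
    · exact (differentiable_id.sub_const _).differentiableOn
    · intro x _ y _ hxy
      simpa using sub_left_injective hxy
    · simp
    · intro v hv
      simp only [mem_ball, dist_zero_right] at hv
      refine ⟨v + z i, hball ?_, by simp⟩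
      rw [mem_ball, dist_eq_norm]
      simpa using hv
    · rintro _ ⟨w, hw, rfl⟩
      have := hr hw
      simp only [mem_ball, dist_eq_norm] at this ⊢
      simpa using this
  -- each Ti is bounded above by 1
  have hbddTi : ∀ i, Ti i ⊆ Iic 1 := by
    rintro i t ⟨f, a, b, ha, hb, -, -, -, hb1, hb2, rfl⟩
    have hab : a ≤ b := aux_ball_radius_le (1 : ℂ) (by simp) ha (hb1.trans hb2)
    exact div_le_one_of_le₀ hab hb.le
  have hbddTi' : ∀ i, BddAbove (Ti i) := fun i => ⟨1, fun t ht => hbddTi i ht⟩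
  -- positivity of sSup (Ti i)
  have hpos : ∀ i, 0 < sSup (Ti i) := by
    intro i
    obtain ⟨t, ht⟩ := hne i
    have ht' : 0 < t := by
      obtain ⟨f, a, b, ha, hb, -, -, -, -, -, rfl⟩ := ht
      positivity
    exact ht'.trans_le (le_csSup (hbddTi' i) ht)
  -- T is bounded above by 1
  have hbddT : BddAbove T := by
    refine ⟨1, ?_⟩
    rintro t ⟨f, a, b, ha, hb, -, -, -, hb1, hb2, rfl⟩
    have hab : a ≤ b := by
      refine aux_ball_radius_le (EuclideanSpace.single (⟨0, hn⟩ : Fin n) (1 : ℂ)) ?_ ha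
        (hb1.trans hb2)
      rw [EuclideanSpace.norm_single]
      simp
    exact div_le_one_of_le₀ hab hb.le
  -- approximating sequences
  have key : ∀ (k : ℕ) (i : Fin n), ∃ t ∈ Ti i,
      sSup (Ti i) - 1 / (k + 1) < t := by
    intro k i
    apply exists_lt_of_lt_csSup (hne i)
    have : (0 : ℝ) < 1 / (k + 1) := by positivity
    linarith
  choose t ht hlt using key
  have htle : ∀ k i, t k i ≤ sSup (Ti i) := fun k i => le_csSup (hbddTi' i) (ht k i)
  have htpos : ∀ k i, 0 < t k i := by
    intro k i
    obtain ⟨f, a, b, ha, hb, -, -, -, -, -, heq⟩ := ht k i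
    rw [heq]; positivity
  -- the value associated to step k is in T
  have hstep : ∀ k : ℕ, (Real.sqrt (∑ i, (t k i)⁻¹ ^ 2))⁻¹ ∈ T := by
    intro k
    have h' : ∀ i, ∃ (f : ℂ → ℂ) (a b : ℝ), 0 < a ∧ 0 < b ∧
        DifferentiableOn ℂ f (Ωs i) ∧ Set.InjOn f (Ωs i) ∧ f (z i) = 0 ∧
        ball (0 : ℂ) a ⊆ f '' (Ωs i) ∧ f '' (Ωs i) ⊆ ball (0 : ℂ) b ∧
        t k i = a / b := fun i => ht k i
    choose f a b ha hb hdiff hinj hz0 hb1 hb2 heq using h'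
    have := aux_product_mem n hn Ωs f a b ha hb hdiff hinj z hz0 hb1 hb2
    have hcong : (∑ i, (t k i)⁻¹ ^ 2) = ∑ i, (a i / b i)⁻¹ ^ 2 := by
      apply Finset.sum_congr rfl
      intro i _
      rw [heq i]
    rw [hcong]
    exact this
  have hstep' : ∀ k : ℕ, (Real.sqrt (∑ i, (t k i)⁻¹ ^ 2))⁻¹ ≤ sSup T :=
    fun k => le_csSup hbddT (hstep k)
  -- convergence
  have htend : ∀ i, Filter.Tendsto (fun k => t k i) Filter.atTop
      (nhds (sSup (Ti i))) := by
    intro i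
    apply tendsto_of_tendsto_of_tendsto_of_le_of_le
      (g := fun k : ℕ => sSup (Ti i) - 1 / (k + 1)) (h := fun _ : ℕ => sSup (Ti i))
    · have : Filter.Tendsto (fun k : ℕ => sSup (Ti i) - 1 / ((k : ℝ) + 1)) Filter.atTop
          (nhds (sSup (Ti i) - 0)) :=
        tendsto_const_nhds.sub tendsto_one_div_add_atTop_nhds_zero_nat
      simpa using this
    · exact tendsto_const_nhds
    · exact fun k => (hlt k i).le
    · exact fun k => htle k i
  have hsum : Filter.Tendsto (fun k => ∑ i, (t k i)⁻¹ ^ 2) Filter.atTop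
      (nhds (∑ i, (sSup (Ti i))⁻¹ ^ 2)) := by
    apply tendsto_finset_sum
    intro i _
    exact ((htend i).inv₀ (hpos i).ne').pow 2
  have hsqrt : Filter.Tendsto (fun k => Real.sqrt (∑ i, (t k i)⁻¹ ^ 2)) Filter.atTop
      (nhds (Real.sqrt (∑ i, (sSup (Ti i))⁻¹ ^ 2))) :=
    (Real.continuous_sqrt.tendsto _).comp hsum
  have hsqrtne : Real.sqrt (∑ i, (sSup (Ti i))⁻¹ ^ 2) ≠ 0 := by
    apply ne_of_gt
    apply Real.sqrt_pos.2
    apply Finset.sum_pos (fun i _ => by have := hpos i; positivity)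
    exact Finset.univ_nonempty_iff.2 ⟨⟨0, hn⟩⟩
  have hfinal : Filter.Tendsto (fun k => (Real.sqrt (∑ i, (t k i)⁻¹ ^ 2))⁻¹)
      Filter.atTop (nhds ((Real.sqrt (∑ i, (sSup (Ti i))⁻¹ ^ 2))⁻¹)) :=
    hsqrt.inv₀ hsqrtne
  have := le_of_tendsto' hfinal hstep'
  rw [hgoal]
  simp only [hSi]
  exact this
end
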